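/- Fix an integer k ≥ 1, data a₁,…,a_k ∈ (0,∞) and z₁,…,z_k ∈ {0,1}, and parameters μ ∈ ℝ, σ > 0. Let π_SK(α,β) = (√(2πσ²)·αβ)^{-1}·exp(-(log α − μ)²/(2σ²)) for (α,β) ∈ (0,∞)². Then the posterior built from π_SK is improper: ∫_{(0,∞)²} ℓ_k(z|a,(α,β))·π_SK(α,β) dα dβ = +∞. -/

import Mathlib

open MeasureTheory Real Filter Set
open scoped ENNReal

/-- The standard Gaussian cumulative distribution function. -/
noncomputable def Phi (x : ℝ) : ℝ :=
  (Real.sqrt (2 * Real.pi))⁻¹ * ∫ t in Set.Iic x, Real.exp (-t ^ 2 / 2)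

/-- The likelihood of the log-normal (probit) fragility model. -/
noncomputable def lik (k : ℕ) (a : Fin k → ℝ) (z : Fin k → ℕ) (α β : ℝ) : ℝ :=
  ∏ i, Phi (Real.log (a i / α) / β) ^ (z i) *
    (1 - Phi (Real.log (a i / α) / β)) ^ (1 - z i)

/-- The prior of Straub and Der Kiureghian:
`π_SK(α,β) = (√(2πσ²)·αβ)⁻¹ exp(-(log α − μ)²/(2σ²))`. -/
noncomputable def piSK (μ σ α β : ℝ) : ℝ :=
  (Real.sqrt (2 * Real.pi * σ ^ 2) * α * β)⁻¹ *
    Real.exp (-(Real.log α - μ) ^ 2 / (2 * σ ^ 2))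

lemma gauss_int : Integrable (fun t : ℝ => Real.exp (-t ^ 2 / 2)) := by
  have h := integrable_exp_neg_mul_sq (by norm_num : (0:ℝ) < 1/2)
  have he : (fun t : ℝ => Real.exp (-(1/2) * t ^ 2)) = fun t : ℝ => Real.exp (-t ^ 2 / 2) := by
    funext t; ring_nf
  rwa [he] at h

lemma gauss_total : ∫ t : ℝ, Real.exp (-t ^ 2 / 2) = Real.sqrt (2 * Real.pi) := by
  have h := integral_gaussian (1/2 : ℝ)
  rw [show Real.pi / (1/2 : ℝ) = 2 * Real.pi by ring] at h
  rw [← h]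
  congr 1; funext t; ring_nf

lemma gauss_setInt_pos {s : Set ℝ} (hs : MeasurableSet s) (hvol : 0 < volume s) :
    0 < ∫ t in s, Real.exp (-t ^ 2 / 2) := by
  refine (setIntegral_pos_iff_support_of_nonneg_ae ?_ gauss_int.integrableOn).mpr ?_
  · filter_upwards with t using (Real.exp_pos _).le
  · have hsupp : Function.support (fun t : ℝ => Real.exp (-t ^ 2 / 2)) = Set.univ := by
      ext t; simp [Real.exp_ne_zero]
    rwa [hsupp, Set.univ_inter]

lemma Phi_pos (x : ℝ) : 0 < Phi x := by
  have h1 : 0 < Real.sqrt (2 * Real.pi) := Real.sqrt_pos.mpr (by positivity)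
  have h2 : 0 < ∫ t in Set.Iic x, Real.exp (-t ^ 2 / 2) :=
    gauss_setInt_pos measurableSet_Iic (by rw [Real.volume_Iic]; exact ENNReal.zero_lt_top)
  exact mul_pos (inv_pos.mpr h1) h2

lemma Phi_lt_one (x : ℝ) : Phi x < 1 := by
  have h1 : 0 < Real.sqrt (2 * Real.pi) := Real.sqrt_pos.mpr (by positivity)
  have h2 : 0 < ∫ t in Set.Ioi x, Real.exp (-t ^ 2 / 2) :=
    gauss_setInt_pos measurableSet_Ioi (by rw [Real.volume_Ioi]; exact ENNReal.zero_lt_top)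
  have hsplit : (∫ t in Set.Iic x, Real.exp (-t ^ 2 / 2))
      + (∫ t in Set.Ioi x, Real.exp (-t ^ 2 / 2)) = Real.sqrt (2 * Real.pi) := by
    rw [← gauss_total]
    exact intervalIntegral.integral_Iic_add_Ioi gauss_int.integrableOn gauss_int.integrableOn
  have hlt : (∫ t in Set.Iic x, Real.exp (-t ^ 2 / 2)) < Real.sqrt (2 * Real.pi) := by linarith
  have := mul_lt_mul_of_pos_left hlt (inv_pos.mpr h1)
  rwa [inv_mul_cancel₀ h1.ne'] at this

lemma Phi_mono : Monotone Phi := by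
  intro x y hxy
  unfold Phi
  apply mul_le_mul_of_nonneg_left _ (by positivity)
  apply setIntegral_mono_set gauss_int.integrableOn
  · filter_upwards with t using (Real.exp_pos _).le
  · exact HasSubset.Subset.eventuallyLE (Iic_subset_Iic.mpr hxy)

/-- The posterior built from `π_SK` is improper:
`∫_{(0,∞)²} ℓ_k(z|a,(α,β))·π_SK(α,β) dα dβ = +∞`. -/
theorem stmt15 (k : ℕ) (hk : 1 ≤ k) (a : Fin k → ℝ) (ha : ∀ i, 0 < a i)
    (z : Fin k → ℕ) (hz : ∀ i, z i = 0 ∨ z i = 1) (μ σ : ℝ) (hσ : 0 < σ) :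
    ∫⁻ θ in Set.Ioi (0 : ℝ) ×ˢ Set.Ioi (0 : ℝ),
      ENNReal.ofReal (lik k a z θ.1 θ.2 * piSK μ σ θ.1 θ.2) = ⊤ := by
  set M : ℝ := (∑ j, |Real.log (a j)|) + 1 with hMdef
  have hM1 : 1 ≤ M := by
    have : 0 ≤ ∑ j, |Real.log (a j)| := Finset.sum_nonneg fun j _ => abs_nonneg _
    simp only [hMdef]; linarith
  set c0 : ℝ := min (Phi (-M)) (1 - Phi M) with hc0def
  have hc0 : 0 < c0 := lt_min (Phi_pos _) (by linarith [Phi_lt_one M])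
  have hσ2 : 0 < Real.sqrt (2 * Real.pi * σ ^ 2) := Real.sqrt_pos.mpr (by positivity)
  set c1 : ℝ := (Real.sqrt (2 * Real.pi * σ ^ 2))⁻¹ * 2⁻¹
      * Real.exp (-(1 + |μ|) ^ 2 / (2 * σ ^ 2)) with hc1def
  have hc1 : 0 < c1 := by positivity
  set c : ℝ := c0 ^ k * c1 with hcdef
  have hc : 0 < c := by positivity
  -- pointwise lower bound on (1,2) × (1,∞)
  have hpt : ∀ α β : ℝ, α ∈ Ioo (1:ℝ) 2 → β ∈ Ioi (1:ℝ) →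
      c * β⁻¹ ≤ lik k a z α β * piSK μ σ α β := by
    rintro α β ⟨hα1, hα2⟩ hβ
    have hβ1 : (1:ℝ) < β := hβ
    have hα0 : 0 < α := lt_trans one_pos hα1
    have hβ0 : 0 < β := lt_trans one_pos hβ1
    have hlogα0 : 0 ≤ Real.log α := Real.log_nonneg hα1.le
    have hlogα1 : Real.log α ≤ 1 := by
      have := Real.log_le_sub_one_of_pos hα0
      linarith
    -- likelihood bound
    have hlik : c0 ^ k ≤ lik k a z α β := by
      rw [lik]
      calc c0 ^ k = ∏ _i : Fin k, c0 := by
            rw [Finset.prod_const, Finset.card_univ, Fintype.card_fin]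
        _ ≤ _ := by
            refine Finset.prod_le_prod (fun i _ => hc0.le) (fun i _ => ?_)
            set x : ℝ := Real.log (a i / α) / β with hxdef
            have hx : |x| ≤ M := by
              have h1 : |Real.log (a i / α)| ≤ M := by
                rw [Real.log_div (ha i).ne' hα0.ne']
                have h2 : |Real.log (a i)| ≤ ∑ j, |Real.log (a j)| :=
                  Finset.single_le_sum (f := fun j => |Real.log (a j)|) (fun j _ => abs_nonneg _) (Finset.mem_univ i)
                have h3 : |Real.log α| ≤ 1 := by
                  rw [abs_of_nonneg hlogα0]; exact hlogα1
                calc |Real.log (a i) - Real.log α|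
                    ≤ |Real.log (a i)| + |Real.log α| := abs_sub _ _
                  _ ≤ M := by simp only [hMdef]; linarith
              calc |x| = |Real.log (a i / α)| / β := by
                    rw [hxdef, abs_div, abs_of_pos hβ0]
                _ ≤ |Real.log (a i / α)| := div_le_self (abs_nonneg _) hβ1.le
                _ ≤ M := h1
            have hPl : c0 ≤ Phi x :=
              le_trans (min_le_left _ _) (Phi_mono (neg_le_of_abs_le hx))
            have hPu : c0 ≤ 1 - Phi x := by
              have := Phi_mono (le_of_abs_le hx)
              have := min_le_right (Phi (-M)) (1 - Phi M)
              linarith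
            rcases hz i with h | h <;> simp only [h] <;> simp [pow_one]
            · exact hPu
            · exact hPl
    have hlik0 : (0:ℝ) ≤ lik k a z α β := le_trans (by positivity) hlik
    -- prior bound
    have hpi : c1 * β⁻¹ ≤ piSK μ σ α β := by
      rw [piSK]
      have habs : |Real.log α - μ| ≤ 1 + |μ| := by
        calc |Real.log α - μ| ≤ |Real.log α| + |μ| := abs_sub _ _
          _ ≤ 1 + |μ| := by rw [abs_of_nonneg hlogα0]; linarith
      have hsq : (Real.log α - μ) ^ 2 ≤ (1 + |μ|) ^ 2 := by
        have h := abs_le.mp habs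
        nlinarith [h.1, h.2]
      have hexp : Real.exp (-(1 + |μ|) ^ 2 / (2 * σ ^ 2))
          ≤ Real.exp (-(Real.log α - μ) ^ 2 / (2 * σ ^ 2)) := by
        apply Real.exp_le_exp.mpr
        gcongr
      have hαinv : (2:ℝ)⁻¹ ≤ α⁻¹ := by
        rw [inv_le_inv₀ (by norm_num) hα0]
        exact hα2.le
      have heq : (Real.sqrt (2 * Real.pi * σ ^ 2) * α * β)⁻¹
          = (Real.sqrt (2 * Real.pi * σ ^ 2))⁻¹ * α⁻¹ * β⁻¹ := by
        rw [mul_inv, mul_inv]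
      rw [heq]
      calc c1 * β⁻¹ = ((Real.sqrt (2 * Real.pi * σ ^ 2))⁻¹ * β⁻¹)
            * (2⁻¹ * Real.exp (-(1 + |μ|) ^ 2 / (2 * σ ^ 2))) := by
            rw [hc1def]; ring
        _ ≤ ((Real.sqrt (2 * Real.pi * σ ^ 2))⁻¹ * β⁻¹)
            * (α⁻¹ * Real.exp (-(Real.log α - μ) ^ 2 / (2 * σ ^ 2))) := by
            apply mul_le_mul_of_nonneg_left _ (by positivity)
            exact mul_le_mul hαinv hexp (by positivity) (by positivity)
        _ = (Real.sqrt (2 * Real.pi * σ ^ 2))⁻¹ * α⁻¹ * β⁻¹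
            * Real.exp (-(Real.log α - μ) ^ 2 / (2 * σ ^ 2)) := by ring
    calc c * β⁻¹ = c0 ^ k * (c1 * β⁻¹) := by rw [hcdef]; ring
      _ ≤ lik k a z α β * piSK μ σ α β :=
          mul_le_mul hlik hpi (by positivity) hlik0
  -- the integral of c/β over (1,2)×(1,∞) is infinite
  have hβint : ∫⁻ β in Ioi (1:ℝ), ENNReal.ofReal (c * β⁻¹) = ⊤ := by
    by_contra h
    have hlt : ∫⁻ β in Ioi (1:ℝ), ENNReal.ofReal (c * β⁻¹) < ⊤ := lt_top_iff_ne_top.mpr h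
    have hint : IntegrableOn (fun β : ℝ => c * β⁻¹) (Ioi 1) := by
      refine ⟨(measurable_const.mul measurable_inv).aestronglyMeasurable, ?_⟩
      rw [hasFiniteIntegral_iff_ofReal ?_]
      · exact hlt
      · filter_upwards [ae_restrict_mem measurableSet_Ioi] with β hβ
        have : (0:ℝ) < β := lt_trans one_pos (mem_Ioi.mp hβ)
        positivity
    have h2 : IntegrableOn (fun β : ℝ => β⁻¹) (Ioi (1:ℝ)) := by
      have h3 := hint.const_mul c⁻¹
      simpa [IntegrableOn, ← mul_assoc, inv_mul_cancel₀ hc.ne'] using h3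
    exact not_IntegrableOn_Ioi_inv h2
  have hT : ∫⁻ θ in (Ioo (1:ℝ) 2) ×ˢ (Ioi (1:ℝ)),
      ENNReal.ofReal (c * θ.2⁻¹) = ⊤ := by
    rw [Measure.volume_eq_prod, ← Measure.prod_restrict]
    have hprod := lintegral_prod_mul (μ := volume.restrict (Ioo (1:ℝ) 2))
      (ν := volume.restrict (Ioi (1:ℝ))) (f := fun _ : ℝ => (1:ℝ≥0∞))
      (g := fun β : ℝ => ENNReal.ofReal (c * β⁻¹)) aemeasurable_const
      ((ENNReal.measurable_ofReal.comp (measurable_const.mul measurable_inv)).aemeasurable)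
    simp only [one_mul, Function.comp] at hprod
    rw [hprod, lintegral_one, Measure.restrict_apply_univ, Real.volume_Ioo, hβint]
    rw [show (2:ℝ) - 1 = 1 by norm_num, ENNReal.ofReal_one, one_mul]
  have hsub : (Ioo (1:ℝ) 2) ×ˢ (Ioi (1:ℝ)) ⊆ (Ioi (0:ℝ)) ×ˢ (Ioi (0:ℝ)) := fun p hp =>
    ⟨lt_trans one_pos hp.1.1, mem_Ioi.mpr (lt_trans one_pos (mem_Ioi.mp hp.2))⟩
  rw [eq_top_iff]
  calc (⊤:ℝ≥0∞) = ∫⁻ θ in (Ioo (1:ℝ) 2) ×ˢ (Ioi (1:ℝ)),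
        ENNReal.ofReal (c * θ.2⁻¹) := hT.symm
    _ ≤ ∫⁻ θ in (Ioo (1:ℝ) 2) ×ˢ (Ioi (1:ℝ)),
        ENNReal.ofReal (lik k a z θ.1 θ.2 * piSK μ σ θ.1 θ.2) :=
        setLIntegral_mono' (measurableSet_Ioo.prod measurableSet_Ioi)
          (fun θ hθ => ENNReal.ofReal_le_ofReal (hpt θ.1 θ.2 hθ.1 hθ.2))
    _ ≤ _ := lintegral_mono_set hsub
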